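/- For any stochastic policy π of a discounted MDP with γ ∈ [0,1), the Bellman residual of the optimal operator at v_π is nonnegative and controls the global loss: T v_π - v_π ≥ 0 componentwise, and for any stochastic policy π' and probability distribution μ on states, μ·(v_{π'} - v_π) ≤ (1-γ)^{-1} ‖d_{μ,π'}/ν‖_∞ · ν·(T v_π - v_π) for every probability distribution ν such that ‖d_{μ,π'}/ν‖_∞ (the smallest C with d_{μ,π'}(s) ≤ Cν(s) for all s) is finite. -/

import Mathlib

open Matrix Filter Topology

section MDPdefs

variable {S A : Type*}

/-- `P` is a transition kernel: nonnegative and each row sums to one. -/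
def IsKernel [Fintype S] (P : S → A → S → ℝ) : Prop :=
  ∀ s a, (∀ s', 0 ≤ P s a s') ∧ ∑ s', P s a s' = 1

/-- A stochastic policy: a probability distribution over actions in each state. -/
def IsPolicy [Fintype A] (π : S → A → ℝ) : Prop :=
  ∀ s, (∀ a, 0 ≤ π s a) ∧ ∑ a, π s a = 1

/-- A probability distribution over states. -/
def IsDist [Fintype S] (μ : S → ℝ) : Prop :=
  (∀ s, 0 ≤ μ s) ∧ ∑ s, μ s = 1

/-- The reward vector `r_π(s) = ∑_a π(a|s) r(s,a)`. -/
def rPol [Fintype A] (r : S → A → ℝ) (π : S → A → ℝ) : S → ℝ :=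
  fun s => ∑ a, π s a * r s a

/-- The stochastic matrix `P_π(s,s') = ∑_a π(a|s) P(s'|s,a)`. -/
def PPol [Fintype A] (P : S → A → S → ℝ) (π : S → A → ℝ) : Matrix S S ℝ :=
  Matrix.of fun s s' => ∑ a, π s a * P s a s'

/-- The Bellman operator `T_π v = r_π + γ P_π v`. -/
noncomputable def bellman [Fintype S] [Fintype A] (P : S → A → S → ℝ) (r : S → A → ℝ)
    (γ : ℝ) (π : S → A → ℝ) (v : S → ℝ) : S → ℝ :=
  rPol r π + γ • (PPol P π *ᵥ v)

/-- The optimal Bellman operator `(Tv)(s) = max_a [r(s,a) + γ ∑_{s'} P(s'|s,a) v(s')]`. -/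
noncomputable def optBellman [Fintype S] [Fintype A] [Nonempty A] (P : S → A → S → ℝ)
    (r : S → A → ℝ) (γ : ℝ) (v : S → ℝ) : S → ℝ :=
  fun s => Finset.univ.sup' Finset.univ_nonempty fun a => r s a + γ * ∑ s', P s a s' * v s'

/-- The value function of policy `π`, `v_π = (I - γ P_π)⁻¹ r_π`, the unique solution of
`v = r_π + γ P_π v` when `0 ≤ γ < 1`. -/
noncomputable def valueFn [Fintype S] [Fintype A] [DecidableEq S] (P : S → A → S → ℝ)
    (r : S → A → ℝ) (γ : ℝ) (π : S → A → ℝ) : S → ℝ :=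
  ((1 : Matrix S S ℝ) - γ • PPol P π)⁻¹ *ᵥ rPol r π

/-- The γ-weighted occupancy measure `d_{μ,π} = (1-γ) μ (I - γ P_π)⁻¹` (a row vector). -/
noncomputable def occ [Fintype S] [Fintype A] [DecidableEq S] (P : S → A → S → ℝ)
    (γ : ℝ) (μ : S → ℝ) (π : S → A → ℝ) : S → ℝ :=
  (1 - γ) • (μ ᵥ* ((1 : Matrix S S ℝ) - γ • PPol P π)⁻¹)

/-- The stochastic mixture `(1-α)π + απ'`. -/
def mix (α : ℝ) (π π' : S → A → ℝ) : S → A → ℝ :=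
  fun s a => (1 - α) * π s a + α * π' s a

/-- The `ν`-greedy-complexity `E_ν(Π) = sup_{ρ∈Π} inf_{ρ'∈Π} d_{ν,ρ}·(T v_ρ - T_{ρ'} v_ρ)`. -/
noncomputable def greedyCplx [Fintype S] [Fintype A] [Nonempty A] [DecidableEq S]
    (P : S → A → S → ℝ) (r : S → A → ℝ) (γ : ℝ) (ν : S → ℝ)
    (Pol : Set (S → A → ℝ)) : ℝ :=
  ⨆ ρ : Pol, ⨅ ρ' : Pol,
    occ P γ ν (ρ : S → A → ℝ) ⬝ᵥ
      (optBellman P r γ (valueFn P r γ (ρ : S → A → ℝ)) -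
        bellman P r γ (ρ' : S → A → ℝ) (valueFn P r γ (ρ : S → A → ℝ)))

/-- `π` is an `ε`-local optimum of `J_ν` over `Pol`: for every `π' ∈ Pol`, the (one-sided)
limit of `(ν·v_{(1-α)π+απ'} - ν·v_π)/α` as `α → 0⁺` exists and is at most `ε`. -/
def IsLocalOpt [Fintype S] [Fintype A] [DecidableEq S]
    (P : S → A → S → ℝ) (r : S → A → ℝ) (γ : ℝ) (ν : S → ℝ)
    (Pol : Set (S → A → ℝ)) (π : S → A → ℝ) (ε : ℝ) : Prop :=
  ∀ π' ∈ Pol, ∃ L ≤ ε,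
    Tendsto (fun α : ℝ =>
        (ν ⬝ᵥ valueFn P r γ (mix α π π') - ν ⬝ᵥ valueFn P r γ π) / α)
      (𝓝[>] 0) (𝓝 L)

end MDPdefs


section AuxStmt16

variable {S A : Type*} [Fintype S] [Fintype A] [DecidableEq S]

private lemma ppol_nonneg {P : S → A → S → ℝ} (hP : IsKernel P) {π : S → A → ℝ}
    (hπ : IsPolicy π) (s s' : S) : 0 ≤ PPol P π s s' :=
  Finset.sum_nonneg fun a _ => mul_nonneg ((hπ s).1 a) ((hP s a).1 s')

private lemma ppol_rowsum {P : S → A → S → ℝ} (hP : IsKernel P) {π : S → A → ℝ}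
    (hπ : IsPolicy π) (s : S) : ∑ s', PPol P π s s' = 1 := by
  unfold PPol
  calc ∑ s', ∑ a, π s a * P s a s' = ∑ a, ∑ s', π s a * P s a s' := Finset.sum_comm
    _ = ∑ a, π s a * ∑ s', P s a s' := by
        exact Finset.sum_congr rfl fun a _ => (Finset.mul_sum _ _ _).symm
    _ = ∑ a, π s a := Finset.sum_congr rfl fun a _ => by rw [(hP s a).2, mul_one]
    _ = 1 := (hπ s).2

private lemma pow_stoch (Q : Matrix S S ℝ) (h0 : ∀ s s', 0 ≤ Q s s')
    (h1 : ∀ s, ∑ s', Q s s' = 1) (n : ℕ) :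
    (∀ s s', 0 ≤ (Q ^ n) s s') ∧ ∀ s, ∑ s', (Q ^ n) s s' = 1 := by
  induction n with
  | zero =>
    refine ⟨fun s s' => ?_, fun s => ?_⟩ <;> simp [Matrix.one_apply]
    · positivity
  | succ n ih =>
    rw [pow_succ]
    refine ⟨fun s s' => ?_, fun s => ?_⟩
    · rw [Matrix.mul_apply]
      exact Finset.sum_nonneg fun t _ => mul_nonneg (ih.1 s t) (h0 t s')
    · simp only [Matrix.mul_apply]
      calc ∑ s', ∑ t, (Q ^ n) s t * Q t s' = ∑ t, ∑ s', (Q ^ n) s t * Q t s' :=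
            Finset.sum_comm
        _ = ∑ t, (Q ^ n) s t * ∑ s', Q t s' :=
            Finset.sum_congr rfl fun t _ => (Finset.mul_sum _ _ _).symm
        _ = ∑ t, (Q ^ n) s t := Finset.sum_congr rfl fun t _ => by rw [h1 t, mul_one]
        _ = 1 := ih.2 s

private lemma pow_entry_le_one (Q : Matrix S S ℝ) (h0 : ∀ s s', 0 ≤ Q s s')
    (h1 : ∀ s, ∑ s', Q s s' = 1) (n : ℕ) (s s' : S) : (Q ^ n) s s' ≤ 1 := by
  calc (Q ^ n) s s' ≤ ∑ u, (Q ^ n) s u :=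
        Finset.single_le_sum (fun u _ => (pow_stoch Q h0 h1 n).1 s u) (Finset.mem_univ s')
    _ = 1 := (pow_stoch Q h0 h1 n).2 s

private lemma isUnit_det_aux (Q : Matrix S S ℝ) (h0 : ∀ s s', 0 ≤ Q s s')
    (h1 : ∀ s, ∑ s', Q s s' = 1) {γ : ℝ} (hγ0 : 0 ≤ γ) (hγ1 : γ < 1) :
    IsUnit ((1 : Matrix S S ℝ) - γ • Q).det := by
  rw [isUnit_iff_ne_zero]
  intro hdet
  obtain ⟨v, hv0, hv⟩ := (Matrix.exists_mulVec_eq_zero_iff).2 hdet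
  have key : v = γ • (Q *ᵥ v) := by
    rw [Matrix.sub_mulVec, Matrix.one_mulVec, Matrix.smul_mulVec, sub_eq_zero] at hv
    exact hv
  obtain ⟨t, ht⟩ := Function.ne_iff.mp hv0
  obtain ⟨s₀, -, hs₀⟩ := Finset.univ.exists_max_image (fun s => |v s|) ⟨t, Finset.mem_univ t⟩
  have hpos : 0 < |v s₀| := lt_of_lt_of_le (abs_pos.mpr ht) (hs₀ t (Finset.mem_univ t))
  have hle : |v s₀| ≤ γ * |v s₀| := by
    have hvs : v s₀ = γ * ∑ t', Q s₀ t' * v t' := by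
      have := congrFun key s₀
      simpa [Matrix.mulVec, dotProduct] using this
    calc |v s₀| = γ * |∑ t', Q s₀ t' * v t'| := by
          rw [hvs, abs_mul, abs_of_nonneg hγ0]
      _ ≤ γ * ∑ t', |Q s₀ t' * v t'| :=
          mul_le_mul_of_nonneg_left (Finset.abs_sum_le_sum_abs _ _) hγ0
      _ = γ * ∑ t', Q s₀ t' * |v t'| := by
          congr 1
          exact Finset.sum_congr rfl fun t' _ => by
            rw [abs_mul, abs_of_nonneg (h0 s₀ t')]
      _ ≤ γ * ∑ t', Q s₀ t' * |v s₀| := by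
          refine mul_le_mul_of_nonneg_left (Finset.sum_le_sum fun t' _ => ?_) hγ0
          exact mul_le_mul_of_nonneg_left (hs₀ t' (Finset.mem_univ t')) (h0 s₀ t')
      _ = γ * |v s₀| := by rw [← Finset.sum_mul, h1 s₀, one_mul]
  nlinarith

private lemma inv_entry_nonneg (Q : Matrix S S ℝ) (h0 : ∀ s s', 0 ≤ Q s s')
    (h1 : ∀ s, ∑ s', Q s s' = 1) {γ : ℝ} (hγ0 : 0 ≤ γ) (hγ1 : γ < 1) (s s' : S) :
    0 ≤ (((1 : Matrix S S ℝ) - γ • Q)⁻¹) s s' := by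
  set B := ((1 : Matrix S S ℝ) - γ • Q)⁻¹ with hBdef
  have hdet := isUnit_det_aux Q h0 h1 hγ0 hγ1
  have hBM : B * ((1 : Matrix S S ℝ) - γ • Q) = 1 := Matrix.nonsing_inv_mul _ hdet
  set K := ∑ t, |B s t| with hK
  have key : ∀ n : ℕ, -(γ ^ n * K) ≤ B s s' := by
    intro n
    set x := γ • Q with hx
    set An := ∑ i ∈ Finset.range n, x ^ i with hAn
    have hgeo : ((1 : Matrix S S ℝ) - x) * An = 1 - x ^ n := by
      have h := mul_geom_sum x n
      have h2 : ((1 : Matrix S S ℝ) - x) * An = -((x - 1) * An) := by noncomm_ring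
      rw [h2, h, neg_sub]
    have hB : B = An + B * x ^ n := by
      have h3 : B * (((1 : Matrix S S ℝ) - x) * An) = B * (1 - x ^ n) := by rw [hgeo]
      rw [← mul_assoc, hBM, one_mul, mul_sub, mul_one] at h3
      exact (sub_eq_iff_eq_add.mp h3.symm)
    have hxn : x ^ n = γ ^ n • Q ^ n := smul_pow γ Q n
    have hentry : B s s' = An s s' + γ ^ n * (B * Q ^ n) s s' := by
      conv_lhs => rw [hB]
      rw [Matrix.add_apply, hxn, Matrix.mul_smul, Matrix.smul_apply, smul_eq_mul]
    have hAnn : 0 ≤ An s s' := by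
      rw [hAn, Matrix.sum_apply]
      refine Finset.sum_nonneg fun i _ => ?_
      rw [hx, smul_pow, Matrix.smul_apply, smul_eq_mul]
      exact mul_nonneg (pow_nonneg hγ0 i) ((pow_stoch Q h0 h1 i).1 s s')
    have hprod : -K ≤ (B * Q ^ n) s s' := by
      rw [Matrix.mul_apply, hK, ← Finset.sum_neg_distrib]
      refine Finset.sum_le_sum fun t _ => ?_
      have hq0 := (pow_stoch Q h0 h1 n).1 t s'
      have hq1 := pow_entry_le_one Q h0 h1 n t s'
      nlinarith [neg_abs_le (B s t), abs_nonneg (B s t),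
        mul_nonneg (by linarith [neg_abs_le (B s t)] : (0:ℝ) ≤ B s t + |B s t|) hq0,
        mul_nonneg (abs_nonneg (B s t)) (by linarith : (0:ℝ) ≤ 1 - (Q ^ n) t s')]
    have : -(γ ^ n * K) ≤ γ ^ n * (B * Q ^ n) s s' := by
      rw [neg_mul_eq_mul_neg]
      exact mul_le_mul_of_nonneg_left hprod (pow_nonneg hγ0 n)
    linarith
  have hlim : Filter.Tendsto (fun n : ℕ => -(γ ^ n * K)) atTop (𝓝 0) := by
    have h := tendsto_pow_atTop_nhds_zero_of_lt_one hγ0 hγ1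
    simpa using (h.mul_const K).neg
  exact le_of_tendsto hlim (Filter.Eventually.of_forall key)

private lemma mulVec_valueFn {P : S → A → S → ℝ} (hP : IsKernel P) (r : S → A → ℝ)
    {γ : ℝ} (hγ0 : 0 ≤ γ) (hγ1 : γ < 1) {π : S → A → ℝ} (hπ : IsPolicy π) :
    ((1 : Matrix S S ℝ) - γ • PPol P π) *ᵥ valueFn P r γ π = rPol r π := by
  have hdet := isUnit_det_aux (PPol P π) (ppol_nonneg hP hπ) (ppol_rowsum hP hπ) hγ0 hγ1
  rw [valueFn, Matrix.mulVec_mulVec, Matrix.mul_nonsing_inv _ hdet, Matrix.one_mulVec]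

private lemma valueFn_fixed {P : S → A → S → ℝ} (hP : IsKernel P) (r : S → A → ℝ)
    {γ : ℝ} (hγ0 : 0 ≤ γ) (hγ1 : γ < 1) {π : S → A → ℝ} (hπ : IsPolicy π) :
    valueFn P r γ π = bellman P r γ π (valueFn P r γ π) := by
  have h := mulVec_valueFn hP r hγ0 hγ1 hπ
  rw [Matrix.sub_mulVec, Matrix.one_mulVec, Matrix.smul_mulVec, sub_eq_iff_eq_add'] at h
  rw [bellman, add_comm]
  exact h

private lemma bellman_le_opt [Nonempty A] {P : S → A → S → ℝ} {ρ : S → A → ℝ}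
    (hρ : IsPolicy ρ) (r : S → A → ℝ) {γ : ℝ} (hγ0 : 0 ≤ γ) (v : S → ℝ) (s : S) :
    bellman P r γ ρ v s ≤ optBellman P r γ v s := by
  have hexp : bellman P r γ ρ v s
      = ∑ a, ρ s a * (r s a + γ * ∑ s', P s a s' * v s') := by
    simp only [bellman, Pi.add_apply, Pi.smul_apply, smul_eq_mul, rPol, PPol,
      Matrix.mulVec, dotProduct, Matrix.of_apply]
    have h1 : γ * ∑ s', (∑ a, ρ s a * P s a s') * v s'
        = ∑ a, ρ s a * (γ * ∑ s', P s a s' * v s') := by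
      rw [Finset.mul_sum]
      rw [show ∀ f : S → ℝ, ∑ s', f s' = ∑ s', f s' from fun _ => rfl]
      calc ∑ s', γ * ((∑ a, ρ s a * P s a s') * v s')
          = ∑ s', ∑ a, ρ s a * (γ * (P s a s' * v s')) := by
            refine Finset.sum_congr rfl fun s' _ => ?_
            rw [Finset.sum_mul, Finset.mul_sum]
            exact Finset.sum_congr rfl fun a _ => by ring
        _ = ∑ a, ∑ s', ρ s a * (γ * (P s a s' * v s')) := Finset.sum_comm
        _ = ∑ a, ρ s a * (γ * ∑ s', P s a s' * v s') := by
            refine Finset.sum_congr rfl fun a _ => ?_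
            rw [Finset.mul_sum, Finset.mul_sum]
    rw [h1, ← Finset.sum_add_distrib]
    exact Finset.sum_congr rfl fun a _ => by ring
  rw [hexp]
  calc ∑ a, ρ s a * (r s a + γ * ∑ s', P s a s' * v s')
      ≤ ∑ a, ρ s a * optBellman P r γ v s := by
        refine Finset.sum_le_sum fun a _ => ?_
        exact mul_le_mul_of_nonneg_left
          (Finset.le_sup' (fun a => r s a + γ * ∑ s', P s a s' * v s')
            (Finset.mem_univ a)) ((hρ s).1 a)
    _ = optBellman P r γ v s := by rw [← Finset.sum_mul, (hρ s).2, one_mul]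

end AuxStmt16

/-- `T v_π - v_π ≥ 0` componentwise, and for any policy `π'`, distributions
`μ, ν` and `C = ‖d_{μ,π'}/ν‖_∞`,
`μ·(v_{π'} - v_π) ≤ (1-γ)⁻¹ C ν·(Tv_π - v_π)`. -/
theorem stmt_16 {S A : Type*} [Fintype S] [Fintype A] [Nonempty S] [Nonempty A] [DecidableEq S]
    (P : S → A → S → ℝ) (hP : IsKernel P) (r : S → A → ℝ) (γ : ℝ)
    (hγ0 : 0 ≤ γ) (hγ1 : γ < 1)
    (π : S → A → ℝ) (hπ : IsPolicy π) :
    (∀ s, valueFn P r γ π s ≤ optBellman P r γ (valueFn P r γ π) s)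
    ∧ ∀ π' : S → A → ℝ, IsPolicy π' → ∀ μ ν : S → ℝ, IsDist μ → IsDist ν →
        ∀ C : ℝ, IsLeast {c : ℝ | ∀ s, occ P γ μ π' s ≤ c * ν s} C →
          μ ⬝ᵥ (valueFn P r γ π' - valueFn P r γ π)
            ≤ (1 - γ)⁻¹ * C *
                (ν ⬝ᵥ (optBellman P r γ (valueFn P r γ π) - valueFn P r γ π)) := by
  have hQ0 := ppol_nonneg hP hπ
  have hQ1 := ppol_rowsum hP hπ
  have part1 : ∀ s, valueFn P r γ π s ≤ optBellman P r γ (valueFn P r γ π) s := by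
    intro s
    conv_lhs => rw [valueFn_fixed hP r hγ0 hγ1 hπ]
    exact bellman_le_opt hπ r hγ0 _ s
  refine ⟨part1, ?_⟩
  intro π' hπ' μ ν hμ hν C hC
  set v := valueFn P r γ π with hv
  set v' := valueFn P r γ π' with hv'
  set Q' := PPol P π' with hQ'
  set M' := (1 : Matrix S S ℝ) - γ • Q' with hM'
  have hQ'0 := ppol_nonneg hP hπ'
  have hQ'1 := ppol_rowsum hP hπ'
  have hdet' := isUnit_det_aux Q' hQ'0 hQ'1 hγ0 hγ1
  set w : S → ℝ := bellman P r γ π' v - v with hw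
  set u : S → ℝ := optBellman P r γ v - v with hu
  have hMw : M' *ᵥ (v' - v) = w := by
    rw [Matrix.mulVec_sub]
    have h1 : M' *ᵥ v' = rPol r π' := mulVec_valueFn hP r hγ0 hγ1 hπ'
    have h2 : M' *ᵥ v = v - γ • (Q' *ᵥ v) := by
      rw [hM', Matrix.sub_mulVec, Matrix.one_mulVec, Matrix.smul_mulVec]
    rw [h1, h2, hw, bellman]
    ext s
    simp [hQ']
    ring
  have hsub : v' - v = M'⁻¹ *ᵥ w := by
    rw [← hMw, Matrix.mulVec_mulVec, Matrix.nonsing_inv_mul _ hdet', Matrix.one_mulVec]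
  set d : S → ℝ := μ ᵥ* M'⁻¹ with hd
  have hdnn : ∀ s, 0 ≤ d s := by
    intro s
    rw [hd, Matrix.vecMul]
    exact Finset.sum_nonneg fun t _ =>
      mul_nonneg (hμ.1 t) (inv_entry_nonneg Q' hQ'0 hQ'1 hγ0 hγ1 t s)
  have hocc : ∀ s, occ P γ μ π' s = (1 - γ) * d s := by
    intro s
    rw [occ, Pi.smul_apply, smul_eq_mul]
  have hwd : ∀ s, w s ≤ u s := by
    intro s
    rw [hw, hu, Pi.sub_apply, Pi.sub_apply]
    exact sub_le_sub_right (bellman_le_opt hπ' r hγ0 v s) _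
  have hunn : ∀ s, 0 ≤ u s := fun s => sub_nonneg.mpr (part1 s)
  have hγne : (1 - γ) ≠ 0 := by linarith
  have hγinv : (0:ℝ) ≤ (1 - γ)⁻¹ := by
    have : (0:ℝ) < 1 - γ := by linarith
    positivity
  calc μ ⬝ᵥ (v' - v) = d ⬝ᵥ w := by rw [hsub, Matrix.dotProduct_mulVec]
    _ = ∑ s, d s * w s := rfl
    _ ≤ ∑ s, d s * u s :=
        Finset.sum_le_sum fun s _ => mul_le_mul_of_nonneg_left (hwd s) (hdnn s)
    _ = ∑ s, (1 - γ)⁻¹ * (occ P γ μ π' s * u s) := by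
        refine Finset.sum_congr rfl fun s _ => ?_
        rw [hocc s]
        field_simp
    _ ≤ ∑ s, (1 - γ)⁻¹ * ((C * ν s) * u s) := by
        refine Finset.sum_le_sum fun s _ => ?_
        exact mul_le_mul_of_nonneg_left
          (mul_le_mul_of_nonneg_right (hC.1 s) (hunn s)) hγinv
    _ = (1 - γ)⁻¹ * C * (ν ⬝ᵥ u) := by
        rw [dotProduct, Finset.mul_sum]
        exact Finset.sum_congr rfl fun s _ => by ring
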